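/- Let R be a linearly ordered commutative ring in which there is no element x with 0 < x < 1, let k ≥ 1 be a natural number, and let m, n be elements of R with n > 0 and m > k (where k denotes the image of k in R). Then for every element p ≥ 0 of R, ∑_{i=0}^{k} ∏_{0 ≤ j ≤ k, j ≠ i} (m + j·n) ≠ p · ∏_{j=0}^{k} (m + j·n). -/

import Mathlib

theorem nagell_first_step
    {R : Type*} [CommRing R] [LinearOrder R] [IsStrictOrderedRing R]
    (hdisc : ¬ ∃ x : R, 0 < x ∧ x < 1)
    (k : ℕ) (hk : 1 ≤ k)
    (m n : R) (hn : 0 < n) (hm : (k : R) < m) :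
    ∀ p : R, 0 ≤ p →
      ∑ i ∈ Finset.range (k + 1),
          ∏ j ∈ (Finset.range (k + 1)).erase i, (m + (j : R) * n)
        ≠ p * ∏ j ∈ Finset.range (k + 1), (m + (j : R) * n) := by
  intro p hp heq
  have hm0 : (0:R) < m := lt_of_le_of_lt (Nat.cast_nonneg k) hm
  have hfpos : ∀ j : ℕ, 0 < m + (j:R) * n := fun j => by
    have : (0:R) ≤ (j:R) * n := mul_nonneg (Nat.cast_nonneg j) hn.le
    linarith
  have hdisc' : ∀ a : R, 0 < a → 1 ≤ a := by
    intro a ha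
    by_contra h
    exact hdisc ⟨a, ha, lt_of_not_ge h⟩
  have hm1 : (k:R) + 1 ≤ m := by
    have := hdisc' (m - k) (by linarith)
    linarith
  have hppos : ∀ i : ℕ, 0 < ∏ j ∈ (Finset.range (k+1)).erase i, (m + (j:R) * n) :=
    fun i => Finset.prod_pos (fun j _ => hfpos j)
  have h0mem : (0:ℕ) ∈ Finset.range (k+1) := by simp
  have hkmem : k ∈ Finset.range (k+1) := by simp
  have hFull : ∀ i ∈ Finset.range (k+1),
      (m + (i:R) * n) * ∏ j ∈ (Finset.range (k+1)).erase i, (m + (j:R) * n)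
        = ∏ j ∈ Finset.range (k+1), (m + (j:R) * n) :=
    fun i hi => Finset.mul_prod_erase (Finset.range (k+1)) (fun j : ℕ => m + (j:R) * n) hi
  set P0 : R := ∏ j ∈ (Finset.range (k+1)).erase 0, (m + (j:R) * n) with hP0
  have hle : ∀ i ∈ Finset.range (k+1),
      ∏ j ∈ (Finset.range (k+1)).erase i, (m + (j:R) * n) ≤ P0 := by
    intro i hi
    have h1 : m + (0:R) * n ≤ m + (i:R) * n := by
      have : (0:R) ≤ (i:R) * n := mul_nonneg (Nat.cast_nonneg i) hn.le
      linarith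
    have key : (m + (0:ℕ) * n) * ∏ j ∈ (Finset.range (k+1)).erase i, (m + (j:R) * n)
        ≤ (m + (0:ℕ) * n) * P0 := by
      rw [hP0, hFull 0 h0mem, ← hFull i hi]
      push_cast
      exact mul_le_mul_of_nonneg_right h1 (hppos i).le
    have h0pos : (0:R) < m + (0:ℕ) * n := hfpos 0
    exact le_of_mul_le_mul_left key h0pos
  have hlt : ∏ j ∈ (Finset.range (k+1)).erase k, (m + (j:R) * n) < P0 := by
    have h1 : m + (0:R) * n < m + (k:R) * n := by
      have h2 : (0:R) < (k:R) * n := by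
        have : (1:R) ≤ (k:R) := by exact_mod_cast Nat.one_le_cast.mpr hk
        nlinarith
      linarith
    have key : (m + (0:ℕ) * n) * ∏ j ∈ (Finset.range (k+1)).erase k, (m + (j:R) * n)
        < (m + (0:ℕ) * n) * P0 := by
      rw [hP0, hFull 0 h0mem, ← hFull k hkmem]
      push_cast
      exact mul_lt_mul_of_pos_right h1 (hppos k)
    exact lt_of_mul_lt_mul_left key (hfpos 0).le
  have hsumlt : ∑ i ∈ Finset.range (k + 1),
      ∏ j ∈ (Finset.range (k + 1)).erase i, (m + (j : R) * n)
      < ∑ _i ∈ Finset.range (k + 1), P0 :=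
    Finset.sum_lt_sum hle ⟨k, hkmem, hlt⟩
  have hconst : ∑ _i ∈ Finset.range (k + 1), P0 = ((k:R) + 1) * P0 := by
    rw [Finset.sum_const, Finset.card_range, nsmul_eq_mul]
    push_cast
    ring
  have hSltF : ∑ i ∈ Finset.range (k + 1),
      ∏ j ∈ (Finset.range (k + 1)).erase i, (m + (j : R) * n)
      < ∏ j ∈ Finset.range (k+1), (m + (j:R) * n) := by
    have h2 : ((k:R) + 1) * P0 ≤ m * P0 :=
      mul_le_mul_of_nonneg_right hm1 (hppos 0).le
    have h3 : m * P0 ≤ ∏ j ∈ Finset.range (k+1), (m + (j:R) * n) := by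
      have := hFull 0 h0mem
      push_cast at this
      rw [zero_mul, add_zero] at this
      rw [this]
    calc _ < ((k:R) + 1) * P0 := hconst ▸ hsumlt
      _ ≤ m * P0 := h2
      _ ≤ _ := h3
  have hSpos : 0 < ∑ i ∈ Finset.range (k + 1),
      ∏ j ∈ (Finset.range (k + 1)).erase i, (m + (j : R) * n) :=
    Finset.sum_pos (fun i _ => hppos i) ⟨0, h0mem⟩
  rcases hp.lt_or_eq with hp' | hp'
  · have hp1 : 1 ≤ p := hdisc' p hp'
    have hFpos : 0 < ∏ j ∈ Finset.range (k+1), (m + (j:R) * n) :=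
      Finset.prod_pos (fun j _ => hfpos j)
    nlinarith
  · rw [← hp', zero_mul] at heq
    exact absurd heq hSpos.ne'
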